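/- arXiv:1812.04168 — 6 statements merged into one kernel-verified Lean document; each statement's English description precedes it below -/
import Mathlib

section
/- Let T ≥ 1 be an integer reset period. Suppose there exist a symmetric matrix P ∈ ℝ^{(n_x+n_c)×(n_x+n_c)} and scalars ε ∈ (0,1), μ ∈ [−1,0), δ ∈ [1,∞), ϵ > 0 such that P ≻ ϵ·I, Fᵀ·P·F ⪯ (1+μ)·P, Fᵀ·H·P·H·F ⪯ δ·P, and δ·(1+μ)^{T−1} < ε. Then every reset closed-loop trajectory converges to the origin: for every initial condition z[0] ∈ ℝ^{n_x+n_c}, lim_{k→∞} z[k] = 0 (the closed loop is globally asymptotically stable). -/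
open Matrix Filter

/-- Closed-loop matrix F = [[A + B·D_c·C, B·C_c],[B_c·C, A_c]]. -/
def Fcl {nx nc nu ny : ℕ} (A : Matrix (Fin nx) (Fin nx) ℝ) (B : Matrix (Fin nx) (Fin nu) ℝ)
    (C : Matrix (Fin ny) (Fin nx) ℝ) (Ac : Matrix (Fin nc) (Fin nc) ℝ)
    (Bc : Matrix (Fin nc) (Fin ny) ℝ) (Cc : Matrix (Fin nu) (Fin nc) ℝ)
    (Dc : Matrix (Fin nu) (Fin ny) ℝ) :
    Matrix (Fin nx ⊕ Fin nc) (Fin nx ⊕ Fin nc) ℝ :=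
  Matrix.fromBlocks (A + B * Dc * C) (B * Cc) (Bc * C) Ac

/-- Reset projection H = [[I,0],[0,0]]. -/
def Hmat (nx nc : ℕ) : Matrix (Fin nx ⊕ Fin nc) (Fin nx ⊕ Fin nc) ℝ :=
  Matrix.fromBlocks 1 0 0 0

theorem stmt0 {nx nc nu ny : ℕ} (T : ℕ) (hT : 1 ≤ T)
    (A : Matrix (Fin nx) (Fin nx) ℝ) (B : Matrix (Fin nx) (Fin nu) ℝ)
    (C : Matrix (Fin ny) (Fin nx) ℝ)
    (Ac : Matrix (Fin nc) (Fin nc) ℝ) (Bc : Matrix (Fin nc) (Fin ny) ℝ)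
    (Cc : Matrix (Fin nu) (Fin nc) ℝ) (Dc : Matrix (Fin nu) (Fin ny) ℝ)
    (P : Matrix (Fin nx ⊕ Fin nc) (Fin nx ⊕ Fin nc) ℝ) (hP : P.IsSymm)
    (ε μ δ ϵ : ℝ)
    (hε : ε ∈ Set.Ioo (0 : ℝ) 1) (hμ : μ ∈ Set.Ico (-1 : ℝ) 0)
    (hδ : δ ∈ Set.Ici (1 : ℝ)) (hϵ : 0 < ϵ)
    (h1 : (P - ϵ • 1).PosDef)
    (h2 : ((1 + μ) • P - (Fcl A B C Ac Bc Cc Dc)ᵀ * P * Fcl A B C Ac Bc Cc Dc).PosSemidef)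
    (h3 : (δ • P - (Fcl A B C Ac Bc Cc Dc)ᵀ * Hmat nx nc * P * Hmat nx nc *
      Fcl A B C Ac Bc Cc Dc).PosSemidef)
    (h4 : δ * (1 + μ) ^ (T - 1) < ε)
    (z : ℕ → Fin nx ⊕ Fin nc → ℝ)
    (hz : ∀ k : ℕ,
      z (k + 1) = if (k + 1) % T ≠ 0
        then (Fcl A B C Ac Bc Cc Dc).mulVec (z k)
        else (Hmat nx nc * Fcl A B C Ac Bc Cc Dc).mulVec (z k)) :
    Tendsto z atTop (nhds 0) := by
  obtain ⟨hε0, hε1⟩ := hε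
  obtain ⟨hμ1, hμ0⟩ := hμ
  have hδ1 : (1 : ℝ) ≤ δ := hδ
  have hμnn : (0 : ℝ) ≤ 1 + μ := by linarith
  have hμlt : (1 : ℝ) + μ ≤ 1 := by linarith
  set F := Fcl A B C Ac Bc Cc Dc with hFdef
  set H := Hmat nx nc with hHdef
  set V : (Fin nx ⊕ Fin nc → ℝ) → ℝ := fun x => x ⬝ᵥ P.mulVec x with hVdef
  have quad : ∀ (M : Matrix (Fin nx ⊕ Fin nc) (Fin nx ⊕ Fin nc) ℝ)
      (x : Fin nx ⊕ Fin nc → ℝ),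
      x ⬝ᵥ (Mᵀ * P * M).mulVec x = V (M.mulVec x) := by
    intro M x
    rw [← Matrix.mulVec_mulVec, ← Matrix.mulVec_mulVec, Matrix.dotProduct_mulVec,
      Matrix.vecMul_transpose]
  have hxx : ∀ x : Fin nx ⊕ Fin nc → ℝ, 0 ≤ x ⬝ᵥ x := by
    intro x
    simpa [dotProduct] using
      Finset.sum_nonneg (fun j (_ : j ∈ Finset.univ) => mul_self_nonneg (x j))
  have hsqle : ∀ (x : Fin nx ⊕ Fin nc → ℝ) i, x i ^ 2 ≤ x ⬝ᵥ x := by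
    intro x i
    simpa [dotProduct, pow_two] using Finset.single_le_sum
      (f := fun j => x j * x j) (fun j _ => mul_self_nonneg _) (Finset.mem_univ i)
  have hdot : ∀ x : Fin nx ⊕ Fin nc → ℝ, ϵ * (x ⬝ᵥ x) ≤ V x := by
    intro x
    have h := h1.posSemidef.dotProduct_mulVec_nonneg x
    simp only [star_trivial, Matrix.sub_mulVec, dotProduct_sub, Matrix.smul_mulVec,
      Matrix.one_mulVec, dotProduct_smul, smul_eq_mul] at h
    simp only [hVdef]
    linarith
  have hVnn : ∀ x, 0 ≤ V x := fun x =>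
    le_trans (mul_nonneg hϵ.le (hxx x)) (hdot x)
  have hstepF : ∀ x, V (F.mulVec x) ≤ (1 + μ) * V x := by
    intro x
    have h := h2.dotProduct_mulVec_nonneg x
    simp only [star_trivial, Matrix.sub_mulVec, dotProduct_sub, Matrix.smul_mulVec,
      dotProduct_smul, smul_eq_mul, quad] at h
    simp only [hVdef] at h ⊢
    linarith
  have hHsym : Hᵀ = H := by
    rw [hHdef]; simp [Hmat, Matrix.fromBlocks_transpose]
  have hM : Fᵀ * H * P * H * F = (H * F)ᵀ * P * (H * F) := by
    rw [Matrix.transpose_mul, hHsym]; simp only [Matrix.mul_assoc]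
  have hstepH : ∀ x, V ((H * F).mulVec x) ≤ δ * V x := by
    intro x
    have h := h3.dotProduct_mulVec_nonneg x
    rw [hM] at h
    simp only [star_trivial, Matrix.sub_mulVec, dotProduct_sub, Matrix.smul_mulVec,
      dotProduct_smul, smul_eq_mul, quad] at h
    simp only [hVdef] at h ⊢
    linarith
  -- intra-block decay
  have intra : ∀ m j, j ≤ T - 1 → V (z (m * T + j)) ≤ (1 + μ) ^ j * V (z (m * T)) := by
    intro m j
    induction j with
    | zero => intro _; simp
    | succ j ih =>
      intro hj
      have hj' : j ≤ T - 1 := by omega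
      have hlt : j + 1 < T := by omega
      have hmod : (m * T + j + 1) % T ≠ 0 := by
        have h1 : m * T + j + 1 = (j + 1) + m * T := by ring
        rw [h1, Nat.add_mul_mod_self_right, Nat.mod_eq_of_lt hlt]
        omega
      have hzs := hz (m * T + j)
      rw [if_pos hmod] at hzs
      calc V (z (m * T + (j + 1))) = V (F.mulVec (z (m * T + j))) := by
            rw [show m * T + (j + 1) = m * T + j + 1 from rfl, hzs]
        _ ≤ (1 + μ) * V (z (m * T + j)) := hstepF _
        _ ≤ (1 + μ) * ((1 + μ) ^ j * V (z (m * T))) :=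
            mul_le_mul_of_nonneg_left (ih hj') hμnn
        _ = (1 + μ) ^ (j + 1) * V (z (m * T)) := by ring
  -- one-period decay
  have hwstep : ∀ m, V (z ((m + 1) * T)) ≤ ε * V (z (m * T)) := by
    intro m
    have h5 : ∀ a : ℕ, a + (T - 1) + 1 = a + T := fun a => by omega
    have heq : m * T + (T - 1) + 1 = (m + 1) * T := by rw [h5]; ring
    have hcond : ¬ ((m * T + (T - 1) + 1) % T ≠ 0) := by
      rw [not_ne_iff, heq]
      exact Nat.mul_mod_left _ _
    have hzs := hz (m * T + (T - 1))
    rw [if_neg hcond] at hzs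
    calc V (z ((m + 1) * T)) = V ((H * F).mulVec (z (m * T + (T - 1)))) := by
          rw [← heq, hzs]
      _ ≤ δ * V (z (m * T + (T - 1))) := hstepH _
      _ ≤ δ * ((1 + μ) ^ (T - 1) * V (z (m * T))) :=
          mul_le_mul_of_nonneg_left (intra m (T - 1) le_rfl) (by linarith)
      _ = (δ * (1 + μ) ^ (T - 1)) * V (z (m * T)) := by ring
      _ ≤ ε * V (z (m * T)) := mul_le_mul_of_nonneg_right h4.le (hVnn _)
  have hw : ∀ m, V (z (m * T)) ≤ ε ^ m * V (z 0) := by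
    intro m
    induction m with
    | zero => simp
    | succ m ih =>
      calc V (z ((m + 1) * T)) ≤ ε * V (z (m * T)) := hwstep m
        _ ≤ ε * (ε ^ m * V (z 0)) := mul_le_mul_of_nonneg_left ih hε0.le
        _ = ε ^ (m + 1) * V (z 0) := by ring
  have hbound : ∀ k, V (z k) ≤ ε ^ (k / T) * V (z 0) := by
    intro k
    have h7 : k / T * T + k % T = k := by rw [Nat.mul_comm]; exact Nat.div_add_mod k T
    have h8 : k % T ≤ T - 1 := by
      have := Nat.mod_lt k (show 0 < T by omega); omega
    calc V (z k) = V (z (k / T * T + k % T)) := by rw [h7]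
      _ ≤ (1 + μ) ^ (k % T) * V (z (k / T * T)) := intra _ _ h8
      _ ≤ 1 * V (z (k / T * T)) :=
          mul_le_mul_of_nonneg_right (pow_le_one₀ hμnn hμlt) (hVnn _)
      _ = V (z (k / T * T)) := one_mul _
      _ ≤ ε ^ (k / T) * V (z 0) := hw _
  have hdiv : Tendsto (fun k : ℕ => k / T) atTop atTop := by
    apply tendsto_atTop_atTop.mpr
    intro b
    exact ⟨b * T, fun a ha => (Nat.le_div_iff_mul_le (by omega)).mpr ha⟩
  have htendV : Tendsto (fun k => V (z k)) atTop (nhds 0) := by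
    have h9 : Tendsto (fun k : ℕ => ε ^ (k / T) * V (z 0)) atTop (nhds 0) := by
      have := ((tendsto_pow_atTop_nhds_zero_of_lt_one hε0.le hε1).comp hdiv).mul_const (V (z 0))
      simpa using this
    exact squeeze_zero (fun k => hVnn _) (fun k => hbound k) h9
  rw [tendsto_pi_nhds]
  intro i
  simp only [Pi.zero_apply]
  have hsq : Tendsto (fun k => (z k i) ^ 2) atTop (nhds 0) := by
    have hg : Tendsto (fun k => V (z k) / ϵ) atTop (nhds 0) := by
      simpa using htendV.div_const ϵ
    refine squeeze_zero (fun k => sq_nonneg _) (fun k => ?_) hg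
    have ha : ϵ * (z k i) ^ 2 ≤ ϵ * (z k ⬝ᵥ z k) :=
      mul_le_mul_of_nonneg_left (hsqle (z k) i) hϵ.le
    have hb := hdot (z k)
    rw [le_div_iff₀ hϵ]
    linarith
  have habs : Tendsto (fun k => |z k i|) atTop (nhds 0) := by
    have := (Real.continuous_sqrt.tendsto 0).comp hsq
    simpa [Function.comp_def, Real.sqrt_sq_eq_abs] using this
  have hneg : Tendsto (fun k => -|z k i|) atTop (nhds 0) := by simpa using habs.neg
  exact tendsto_of_tendsto_of_tendsto_of_le_of_le hneg habs
    (fun k => neg_abs_le _) (fun k => le_abs_self _)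
end

section
/- Let T ≥ 1 be an integer reset period, let P ∈ ℝ^{(n_x+n_c)×(n_x+n_c)} be symmetric positive semidefinite, μ ∈ [−1,0), δ ∈ [1,∞), and suppose Fᵀ·P·F ⪯ (1+μ)·P and Fᵀ·H·P·H·F ⪯ δ·P. Define V(z) := zᵀ·P·z. Then every reset closed-loop trajectory z satisfies, for all ℓ ∈ ℕ: (i) V(z[ℓT + i]) ≤ (1+μ)^i · V(z[ℓT]) for every i ∈ {0, …, T−1}, and (ii) V(z[(ℓ+1)T]) ≤ δ·(1+μ)^{T−1} · V(z[ℓT]). -/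
open Matrix Filter

lemma key {n : Type*} [Fintype n] (P M : Matrix n n ℝ) (c : ℝ)
    (h : (c • P - Mᵀ * P * M).PosSemidef) (v : n → ℝ) :
    M.mulVec v ⬝ᵥ P.mulVec (M.mulVec v) ≤ c * (v ⬝ᵥ P.mulVec v) := by
  have h0 := h.dotProduct_mulVec_nonneg v
  simp only [star_trivial, sub_mulVec, dotProduct_sub, smul_mulVec,
    dotProduct_smul, smul_eq_mul, sub_nonneg] at h0
  have e : v ⬝ᵥ (Mᵀ * P * M).mulVec v = M.mulVec v ⬝ᵥ P.mulVec (M.mulVec v) := by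
    rw [← mulVec_mulVec, ← mulVec_mulVec, dotProduct_mulVec, vecMul_transpose]
  linarith [e ▸ h0]

theorem stmt1 {nx nc nu ny : ℕ} (T : ℕ) (hT : 1 ≤ T)
    (A : Matrix (Fin nx) (Fin nx) ℝ) (B : Matrix (Fin nx) (Fin nu) ℝ)
    (C : Matrix (Fin ny) (Fin nx) ℝ)
    (Ac : Matrix (Fin nc) (Fin nc) ℝ) (Bc : Matrix (Fin nc) (Fin ny) ℝ)
    (Cc : Matrix (Fin nu) (Fin nc) ℝ) (Dc : Matrix (Fin nu) (Fin ny) ℝ)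
    (P : Matrix (Fin nx ⊕ Fin nc) (Fin nx ⊕ Fin nc) ℝ) (hP : P.PosSemidef)
    (μ δ : ℝ) (hμ : μ ∈ Set.Ico (-1 : ℝ) 0) (hδ : δ ∈ Set.Ici (1 : ℝ))
    (h2 : ((1 + μ) • P - (Fcl A B C Ac Bc Cc Dc)ᵀ * P * Fcl A B C Ac Bc Cc Dc).PosSemidef)
    (h3 : (δ • P - (Fcl A B C Ac Bc Cc Dc)ᵀ * Hmat nx nc * P * Hmat nx nc *
      Fcl A B C Ac Bc Cc Dc).PosSemidef)
    (z : ℕ → Fin nx ⊕ Fin nc → ℝ)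
    (hz : ∀ k : ℕ,
      z (k + 1) = if (k + 1) % T ≠ 0
        then (Fcl A B C Ac Bc Cc Dc).mulVec (z k)
        else (Hmat nx nc * Fcl A B C Ac Bc Cc Dc).mulVec (z k)) :
    ∀ ℓ : ℕ,
      (∀ i : ℕ, i < T →
        z (ℓ * T + i) ⬝ᵥ P.mulVec (z (ℓ * T + i)) ≤
          (1 + μ) ^ i * (z (ℓ * T) ⬝ᵥ P.mulVec (z (ℓ * T)))) ∧
      z ((ℓ + 1) * T) ⬝ᵥ P.mulVec (z ((ℓ + 1) * T)) ≤
        δ * (1 + μ) ^ (T - 1) * (z (ℓ * T) ⬝ᵥ P.mulVec (z (ℓ * T))) := by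
  set F := Fcl A B C Ac Bc Cc Dc with hF
  set H := Hmat nx nc with hH
  obtain ⟨hμ1, hμ0⟩ := hμ
  have hμpos : (0:ℝ) ≤ 1 + μ := by linarith
  have hδ0 : (0:ℝ) ≤ δ := le_trans zero_le_one hδ
  intro ℓ
  have part1 : ∀ i : ℕ, i < T →
      z (ℓ * T + i) ⬝ᵥ P.mulVec (z (ℓ * T + i)) ≤
        (1 + μ) ^ i * (z (ℓ * T) ⬝ᵥ P.mulVec (z (ℓ * T))) := by
    intro i
    induction i with
    | zero => intro _; simp
    | succ n ih =>
      intro h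
      have hn : n < T := Nat.lt_of_succ_lt h
      have hmod : (ℓ * T + n + 1) % T ≠ 0 := by
        have : (ℓ * T + n + 1) % T = (n + 1) % T := by
          rw [show ℓ * T + n + 1 = (n + 1) + ℓ * T from by ring, Nat.add_mul_mod_self_right]
        rw [this, Nat.mod_eq_of_lt h]
        omega
      have hstep : z (ℓ * T + n + 1) = F.mulVec (z (ℓ * T + n)) := by
        rw [hz (ℓ * T + n), if_pos hmod]
      have h1 := key P F (1 + μ) h2 (z (ℓ * T + n))
      calc z (ℓ * T + (n + 1)) ⬝ᵥ P.mulVec (z (ℓ * T + (n + 1)))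
          = F.mulVec (z (ℓ * T + n)) ⬝ᵥ P.mulVec (F.mulVec (z (ℓ * T + n))) := by
            rw [show ℓ * T + (n + 1) = ℓ * T + n + 1 from rfl, hstep]
        _ ≤ (1 + μ) * (z (ℓ * T + n) ⬝ᵥ P.mulVec (z (ℓ * T + n))) := h1
        _ ≤ (1 + μ) * ((1 + μ) ^ n * (z (ℓ * T) ⬝ᵥ P.mulVec (z (ℓ * T)))) :=
            mul_le_mul_of_nonneg_left (ih hn) hμpos
        _ = (1 + μ) ^ (n + 1) * (z (ℓ * T) ⬝ᵥ P.mulVec (z (ℓ * T))) := by ring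
  refine ⟨part1, ?_⟩
  have hHT : Hᵀ = H := by
    simp [hH, Hmat, Matrix.fromBlocks_transpose]
  have h3' : (δ • P - (H * F)ᵀ * P * (H * F)).PosSemidef := by
    have : (H * F)ᵀ * P * (H * F) = Fᵀ * H * P * H * F := by
      rw [Matrix.transpose_mul, hHT]
      noncomm_ring
    rw [this]
    exact h3
  have heq : (ℓ + 1) * T = ℓ * T + (T - 1) + 1 := by
    cases T with
    | zero => omega
    | succ m => ring_nf; omega
  have hmod0 : ¬ (ℓ * T + (T - 1) + 1) % T ≠ 0 := by
    rw [← heq]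
    simp [Nat.mul_mod_left]
  have hstep : z ((ℓ + 1) * T) = (H * F).mulVec (z (ℓ * T + (T - 1))) := by
    rw [heq, hz (ℓ * T + (T - 1)), if_neg hmod0]
  have h1 := key P (H * F) δ h3' (z (ℓ * T + (T - 1)))
  have h4 := part1 (T - 1) (by omega)
  calc z ((ℓ + 1) * T) ⬝ᵥ P.mulVec (z ((ℓ + 1) * T))
      = (H * F).mulVec (z (ℓ * T + (T - 1))) ⬝ᵥ
          P.mulVec ((H * F).mulVec (z (ℓ * T + (T - 1)))) := by rw [hstep]
    _ ≤ δ * (z (ℓ * T + (T - 1)) ⬝ᵥ P.mulVec (z (ℓ * T + (T - 1)))) := h1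
    _ ≤ δ * ((1 + μ) ^ (T - 1) * (z (ℓ * T) ⬝ᵥ P.mulVec (z (ℓ * T)))) :=
        mul_le_mul_of_nonneg_left h4 hδ0
    _ = δ * (1 + μ) ^ (T - 1) * (z (ℓ * T) ⬝ᵥ P.mulVec (z (ℓ * T))) := by ring
end

section
/- Suppose n_c ≥ n_x, the pair (A,B) is stabilizable (there exists K ∈ ℝ^{n_u×n_x} such that every complex eigenvalue of A + B·K has modulus strictly less than 1), and the pair (A,C) is detectable (there exists L ∈ ℝ^{n_x×n_y} such that every complex eigenvalue of A − L·C has modulus strictly less than 1). Then there exist controller matrices A_c ∈ ℝ^{n_c×n_c}, B_c ∈ ℝ^{n_c×n_y}, C_c ∈ ℝ^{n_u×n_c}, D_c ∈ ℝ^{n_u×n_y}, a symmetric matrix P ∈ ℝ^{(n_x+n_c)×(n_x+n_c)}, a scalar μ* ∈ [−1,0), and a scalar ϵ* > 0 such that P ≻ ϵ*·I and Fᵀ·P·F ⪯ (1+μ*)·P, where F is the corresponding closed-loop matrix. -/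
open Matrix

namespace SOxAux

open Filter
open scoped NNReal ENNReal

set_option linter.unusedSectionVars false

section Lyap
variable {n : Type*} [Fintype n] [DecidableEq n]

attribute [local instance] Matrix.linftyOpNormedRing Matrix.linftyOpNormedAlgebra
  Matrix.linftyOpNormedAddCommGroup Matrix.linftyOpNormedSpace

lemma entry_le_norm (A : Matrix n n ℝ) (i j : n) : ‖A i j‖ ≤ ‖A‖ := by
  rw [← coe_nnnorm, ← coe_nnnorm, NNReal.coe_le_coe, Matrix.linfty_opNNNorm_def]
  calc ‖A i j‖₊ ≤ ∑ j', ‖A i j'‖₊ :=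
        Finset.single_le_sum (f := fun j' => ‖A i j'‖₊) (fun _ _ => zero_le) (Finset.mem_univ j)
    _ ≤ _ := Finset.le_sup (f := fun i => ∑ j' : n, ‖A i j'‖₊) (Finset.mem_univ i)

lemma transpose_norm_le (A : Matrix n n ℝ) : ‖Aᵀ‖ ≤ (Fintype.card n : ℝ) * ‖A‖ := by
  rw [← coe_nnnorm, ← coe_nnnorm]
  have : ‖Aᵀ‖₊ ≤ (Fintype.card n : ℝ≥0) * ‖A‖₊ := by
    rw [Matrix.linfty_opNNNorm_def]
    apply Finset.sup_le
    intro j _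
    calc (∑ i, ‖Aᵀ j i‖₊) = ∑ i, ‖A i j‖₊ := rfl
      _ ≤ ∑ i : n, ∑ j' : n, ‖A i j'‖₊ := by
          refine Finset.sum_le_sum fun i _ => ?_
          exact Finset.single_le_sum (f := fun j' => ‖A i j'‖₊) (fun _ _ => zero_le)
            (Finset.mem_univ j)
      _ ≤ ∑ _i : n, ‖A‖₊ := by
          refine Finset.sum_le_sum fun i _ => ?_
          rw [Matrix.linfty_opNNNorm_def]
          exact Finset.le_sup (f := fun i => ∑ j' : n, ‖A i j'‖₊) (Finset.mem_univ i)
      _ = (Fintype.card n : ℝ≥0) * ‖A‖₊ := by simp [Finset.card_univ, mul_comm]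
  exact_mod_cast this

lemma norm_map_ofReal (A : Matrix n n ℝ) : ‖A.map (Complex.ofReal : ℝ → ℂ)‖ = ‖A‖ := by
  rw [← coe_nnnorm, ← coe_nnnorm, Matrix.linfty_opNNNorm_def, Matrix.linfty_opNNNorm_def]
  simp [Matrix.map_apply]

end Lyap

section Lyap2
variable {n : Type*} [Fintype n] [DecidableEq n]

attribute [local instance] Matrix.linftyOpNormedRing Matrix.linftyOpNormedAlgebra
  Matrix.linftyOpNormedAddCommGroup Matrix.linftyOpNormedSpace

private def entryLM (i j : n) : Matrix n n ℝ →ₗ[ℝ] ℝ where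
  toFun A := A i j
  map_add' _ _ := rfl
  map_smul' _ _ := rfl

private def transLM : Matrix n n ℝ →ₗ[ℝ] Matrix n n ℝ where
  toFun A := Aᵀ
  map_add' _ _ := Matrix.transpose_add _ _
  map_smul' _ _ := Matrix.transpose_smul _ _

private def conjLM (M : Matrix n n ℝ) : Matrix n n ℝ →ₗ[ℝ] Matrix n n ℝ where
  toFun A := Mᵀ * A * M
  map_add' A B := by simp [mul_add, add_mul]
  map_smul' c A := by simp [mul_smul_comm, smul_mul_assoc]

private def quadLM (x : n → ℝ) : Matrix n n ℝ →ₗ[ℝ] ℝ where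
  toFun A := x ⬝ᵥ A *ᵥ x
  map_add' A B := by simp [add_mulVec]
  map_smul' c A := by simp [smul_mulVec]

private lemma realSym_herm {A : Matrix n n ℝ} (h : Aᵀ = A) : A.IsHermitian := by
  rwa [Matrix.IsHermitian, Matrix.conjTranspose_eq_transpose_of_trivial]

private lemma dp_self_nonneg (y : n → ℝ) : 0 ≤ y ⬝ᵥ y :=
  Finset.sum_nonneg fun i _ => mul_self_nonneg _

private lemma dp_self_pos {y : n → ℝ} (hy : y ≠ 0) : 0 < y ⬝ᵥ y := by
  obtain ⟨i, hi⟩ := Function.ne_iff.mp hy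
  have h1 : 0 < y i * y i := mul_self_pos.mpr hi
  have h2 : y i * y i ≤ y ⬝ᵥ y :=
    Finset.single_le_sum (f := fun i => y i * y i) (fun _ _ => mul_self_nonneg _)
      (Finset.mem_univ i)
  linarith

lemma lyap (M : Matrix n n ℝ)
    (h : ∀ z ∈ spectrum ℂ (M.map (Complex.ofReal : ℝ → ℂ)), ‖z‖ < 1) :
    ∃ (P : Matrix n n ℝ) (μ ε : ℝ), P.IsSymm ∧ μ ∈ Set.Ico (-1:ℝ) 0 ∧ 0 < ε ∧
      (P - ε • 1).PosDef ∧ ((1 + μ) • P - Mᵀ * P * M).PosSemidef := by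
  rcases isEmpty_or_nonempty n with hn | hn
  · have hx0 : ∀ x : n → ℝ, x = 0 := fun x => funext fun i => isEmptyElim i
    refine ⟨1, -1/2, 1/2, Matrix.isSymm_one, by norm_num, by norm_num, ?_, ?_⟩
    · exact Matrix.PosDef.of_dotProduct_mulVec_pos (realSym_herm (by ext i j; exact isEmptyElim i)) fun x hx => absurd (hx0 x) hx
    · exact Matrix.PosSemidef.of_dotProduct_mulVec_nonneg (realSym_herm (by ext i j; exact isEmptyElim i)) fun x => by rw [hx0 x]; simp
  -- main case
  set Mc : Matrix n n ℂ := M.map (Complex.ofReal : ℝ → ℂ) with hMc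
  obtain ⟨z₀, hz₀, hρ⟩ := spectrum.exists_nnnorm_eq_spectralRadius Mc
  have hz₀1 : ‖z₀‖ < 1 := h z₀ hz₀
  set r1 : ℝ≥0 := (2 * ‖z₀‖₊ + 1) / 3 with hr1
  set r2 : ℝ≥0 := (‖z₀‖₊ + 2) / 3 with hr2
  have hzn : (0:ℝ) ≤ ‖z₀‖ := norm_nonneg z₀
  have hρr1 : ‖z₀‖₊ < r1 := by
    rw [← NNReal.coe_lt_coe]; push_cast [hr1]; linarith
  have hr12 : r1 < r2 := by
    rw [← NNReal.coe_lt_coe]; push_cast [hr1, hr2]; linarith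
  have hr21 : (r2 : ℝ) < 1 := by push_cast [hr2]; linarith
  have hr2pos : (0:ℝ) < r2 := by push_cast [hr2]; linarith
  -- Gelfand
  have hgel := spectrum.pow_nnnorm_pow_one_div_tendsto_nhds_spectralRadius Mc
  rw [← hρ] at hgel
  have hlt : (‖z₀‖₊ : ℝ≥0∞) < (r1 : ℝ≥0∞) := by exact_mod_cast hρr1
  have hev1 : ∀ᶠ k : ℕ in Filter.atTop,
      (↑‖Mc ^ k‖₊ : ℝ≥0∞) ^ (1/(k:ℝ)) < (r1:ℝ≥0∞) := hgel.eventually_lt_const hlt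
  have hev2 : ∀ᶠ k : ℕ in Filter.atTop, ‖Mc ^ k‖₊ ≤ r1 ^ k := by
    filter_upwards [hev1, Filter.eventually_ge_atTop 1] with k hk hk1
    have hk0 : (0:ℝ) < (k:ℝ) := by exact_mod_cast hk1
    have h2 := ENNReal.rpow_lt_rpow hk hk0
    rw [← ENNReal.rpow_mul, one_div, inv_mul_cancel₀ hk0.ne', ENNReal.rpow_one,
      ENNReal.rpow_natCast, ← ENNReal.coe_pow] at h2
    exact_mod_cast h2.le
  have hmap : ∀ k : ℕ, Mc ^ k = (M ^ k).map (Complex.ofReal : ℝ → ℂ) := by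
    intro k
    have h3 := (map_pow (Complex.ofRealHom.mapMatrix (m := n)) M k).symm
    simp only [RingHom.mapMatrix_apply] at h3
    exact h3
  have hevM : ∀ᶠ k : ℕ in Filter.atTop, ‖M ^ k‖ ≤ (r1:ℝ) ^ k := by
    filter_upwards [hev2] with k hk
    have h4 : ‖Mc ^ k‖ ≤ (r1:ℝ)^k := by exact_mod_cast hk
    rwa [hmap k, norm_map_ofReal] at h4
  set s : ℝ := (r2 : ℝ) with hs
  have hspos : 0 < s := hr2pos
  set G : Matrix n n ℝ := s⁻¹ • M with hG
  set f : ℕ → Matrix n n ℝ := fun k => (G ^ k)ᵀ * G ^ k with hf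
  set c : ℝ := (r1 : ℝ) / s with hc
  have hc0 : 0 ≤ c := by positivity
  have hc1 : c < 1 := (div_lt_one hspos).mpr (by rw [hs]; exact_mod_cast hr12)
  have hnormG : ∀ᶠ k in Filter.atTop, ‖G ^ k‖ ≤ c ^ k := by
    filter_upwards [hevM] with k hk
    rw [hG, smul_pow, norm_smul, norm_pow, Real.norm_eq_abs, abs_of_pos (inv_pos.mpr hspos)]
    calc s⁻¹ ^ k * ‖M ^ k‖ ≤ s⁻¹ ^ k * (r1:ℝ)^k := by
          apply mul_le_mul_of_nonneg_left hk; positivity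
      _ = c ^ k := by rw [hc, div_pow, div_eq_mul_inv, inv_pow, mul_comm]
  have hsum : Summable f := by
    apply Summable.of_norm_bounded_eventually
      (g := fun k => (Fintype.card n : ℝ) * (c^2)^k)
      (((summable_geometric_of_lt_one (by positivity) (by nlinarith)).mul_left _))
    rw [Nat.cofinite_eq_atTop]
    filter_upwards [hnormG] with k hk
    have h1 : ‖f k‖ ≤ ‖(G^k)ᵀ‖ * ‖G^k‖ := Matrix.linfty_opNorm_mul _ _
    have h2 := transpose_norm_le (G^k)
    have h3 : (0:ℝ) ≤ ‖G^k‖ := norm_nonneg _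
    have hck : (0:ℝ) ≤ c ^ k := by positivity
    have hcard : (0:ℝ) ≤ Fintype.card n := by positivity
    calc ‖f k‖ ≤ ‖(G^k)ᵀ‖ * ‖G^k‖ := h1
      _ ≤ ((Fintype.card n : ℝ) * ‖G^k‖) * ‖G^k‖ := mul_le_mul_of_nonneg_right h2 h3
      _ ≤ (Fintype.card n : ℝ) * (c^k * c^k) := by
          rw [mul_assoc]
          exact mul_le_mul_of_nonneg_left (mul_le_mul hk hk h3 hck) hcard
      _ = (Fintype.card n : ℝ) * (c^2)^k := by rw [← pow_mul, two_mul, pow_add]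
  obtain ⟨P, hP⟩ := hsum
  have hfsymm : ∀ k, (f k)ᵀ = f k := fun k => by
    rw [hf]; simp [Matrix.transpose_mul]
  have hPt : Pᵀ = P := by
    have h1 : HasSum (fun k => (f k)ᵀ) Pᵀ :=
      (LinearMap.toContinuousLinearMap (transLM (n := n))).hasSum hP
    simp_rw [hfsymm] at h1
    exact h1.unique hP
  have hquad : ∀ x : n → ℝ, HasSum (fun k => x ⬝ᵥ f k *ᵥ x) (x ⬝ᵥ P *ᵥ x) := fun x =>
    (LinearMap.toContinuousLinearMap (quadLM x)).hasSum hP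
  have hterm : ∀ (x : n → ℝ) k, x ⬝ᵥ f k *ᵥ x = (G^k *ᵥ x) ⬝ᵥ (G^k *ᵥ x) := fun x k => by
    rw [hf]
    rw [show ((G ^ k)ᵀ * G ^ k) *ᵥ x = (G^k)ᵀ *ᵥ (G^k *ᵥ x) from (Matrix.mulVec_mulVec ..).symm,
      Matrix.dotProduct_mulVec, Matrix.vecMul_transpose]
  have hlb : ∀ x : n → ℝ, x ⬝ᵥ x ≤ x ⬝ᵥ P *ᵥ x := fun x => by
    have h0 : x ⬝ᵥ f 0 *ᵥ x = x ⬝ᵥ x := by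
      rw [hf]; simp [Matrix.one_mulVec]
    calc x ⬝ᵥ x = x ⬝ᵥ f 0 *ᵥ x := h0.symm
      _ ≤ ∑' k, x ⬝ᵥ f k *ᵥ x :=
          Summable.le_tsum (hquad x).summable 0 (fun j _ => by rw [hterm]; exact dp_self_nonneg _)
      _ = x ⬝ᵥ P *ᵥ x := (hquad x).tsum_eq
  refine ⟨P, s^2 - 1, 1/2, hPt, ⟨by nlinarith, by nlinarith⟩, by norm_num, ?_, ?_⟩
  · refine Matrix.PosDef.of_dotProduct_mulVec_pos (realSym_herm ?_) fun x hx => ?_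
    · rw [Matrix.transpose_sub, hPt, Matrix.transpose_smul, Matrix.transpose_one]
    · have h5 := hlb x
      have hxx := dp_self_pos (show x ≠ 0 from hx)
      have h6 : star x ⬝ᵥ (P - (1/2:ℝ)•1) *ᵥ x = x ⬝ᵥ P *ᵥ x - (1/2) * (x ⬝ᵥ x) := by
        simp [Matrix.sub_mulVec, Matrix.smul_mulVec, Matrix.one_mulVec, smul_eq_mul]
      rw [h6]; linarith
  · have hconj : HasSum (fun k => Mᵀ * f k * M) (Mᵀ * P * M) :=
      (LinearMap.toContinuousLinearMap (conjLM M)).hasSum hP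
    have hMsG : M = s • G := by rw [hG, smul_smul, mul_inv_cancel₀ hspos.ne', one_smul]
    have hstep : ∀ k, Mᵀ * f k * M = (s^2) • f (k+1) := by
      intro k
      conv_lhs => rw [hMsG]
      simp only [hf]
      have h7 : (s • G)ᵀ * ((G ^ k)ᵀ * G ^ k) * (s • G)
          = (s*s) • (Gᵀ * (G^k)ᵀ * (G^k * G)) := by
        simp [Matrix.transpose_smul, Matrix.smul_mul, Matrix.mul_smul, smul_smul, mul_assoc]
      rw [h7]
      congr 1
      · exact (sq s).symm
      · rw [← Matrix.transpose_mul, ← pow_succ]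
    have h2 : HasSum (fun k => f (k+1)) (P - f 0) := (hasSum_nat_add_iff 1).mpr (by simpa using hP)
    have h3 : HasSum (fun k => (s^2) • f (k+1)) ((s^2) • (P - f 0)) := h2.const_smul _
    have hMPM : Mᵀ * P * M = (s^2) • (P - 1) := by
      have h4 : HasSum (fun k => (s^2) • f (k+1)) (Mᵀ * P * M) := by
        simp_rw [← hstep]; exact hconj
      have h5 := h4.unique h3
      rw [h5]
      congr 2
      rw [hf]; simp
    have h8 : (1 + (s^2-1)) • P - Mᵀ * P * M = (s^2) • (1 : Matrix n n ℝ) := by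
      rw [hMPM, show (1 + (s^2-1)) = s^2 by ring, smul_sub]
      abel
    rw [h8]
    refine Matrix.PosSemidef.of_dotProduct_mulVec_nonneg (realSym_herm (by rw [Matrix.transpose_smul, Matrix.transpose_one])) fun x => ?_
    have h9 : star x ⬝ᵥ ((s^2) • (1 : Matrix n n ℝ)) *ᵥ x = s^2 * (x ⬝ᵥ x) := by
      simp [Matrix.smul_mulVec, Matrix.one_mulVec, smul_eq_mul]
    rw [h9]
    exact mul_nonneg (sq_nonneg s) (dp_self_nonneg x)

end Lyap2

section Spec
variable {m p : Type*} [Fintype m] [DecidableEq m] [Fintype p] [DecidableEq p]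

lemma mem_spec_iff (M : Matrix m m ℂ) (z : ℂ) :
    z ∈ spectrum ℂ M ↔ (z • (1 : Matrix m m ℂ) - M).det = 0 := by
  rw [spectrum.mem_iff, Matrix.isUnit_iff_isUnit_det, isUnit_iff_ne_zero, not_not,
    Algebra.algebraMap_eq_smul_one]

lemma sub_fromBlocks' (X : Matrix m m ℂ) (Y : Matrix p p ℂ)
    (A : Matrix m m ℂ) (B : Matrix m p ℂ) (C : Matrix p m ℂ) (D : Matrix p p ℂ) :
    fromBlocks X 0 0 Y - fromBlocks A B C D = fromBlocks (X - A) (-B) (-C) (Y - D) := by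
  ext (i | i) (j | j) <;> simp [fromBlocks]

lemma smul_one_eq_fromBlocks (z : ℂ) :
    z • (1 : Matrix (m ⊕ p) (m ⊕ p) ℂ) =
      fromBlocks (z • (1 : Matrix m m ℂ)) 0 0 (z • (1 : Matrix p p ℂ)) := by
  rw [← Matrix.fromBlocks_one, Matrix.fromBlocks_smul, smul_zero, smul_zero]

lemma spec_triangular {A : Matrix m m ℂ} {B : Matrix m p ℂ} {D : Matrix p p ℂ} {z : ℂ}
    (hz : z ∈ spectrum ℂ (fromBlocks A B 0 D)) :
    z ∈ spectrum ℂ A ∨ z ∈ spectrum ℂ D := by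
  rw [mem_spec_iff] at hz ⊢
  rw [mem_spec_iff (M := D)]
  rw [smul_one_eq_fromBlocks, sub_fromBlocks', neg_zero, Matrix.det_fromBlocks_zero₂₁] at hz
  exact mul_eq_zero.mp hz

lemma spec_corner {W : Matrix m m ℂ} {z : ℂ} (hz0 : z ≠ 0)
    (hz : z ∈ spectrum ℂ (fromBlocks W 0 0 (0 : Matrix p p ℂ))) :
    z ∈ spectrum ℂ W := by
  rw [mem_spec_iff] at hz ⊢
  rw [smul_one_eq_fromBlocks, sub_fromBlocks', neg_zero, neg_zero, sub_zero,
    Matrix.det_fromBlocks_zero₂₁, Matrix.det_smul, Matrix.det_one, mul_one] at hz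
  rcases mul_eq_zero.mp hz with h | h
  · exact h
  · exact absurd h (pow_ne_zero _ hz0)

end Spec

section Reind
variable {α β : Type*}

lemma fromColumns_map' {a b c : Type*} (X : Matrix a b α) (Y : Matrix a c α) (f : α → β) :
    (fromCols X Y).map f = fromCols (X.map f) (Y.map f) := by
  ext i (j | j) <;> rfl

lemma fromRows_map' {a b c : Type*} (X : Matrix b a α) (Y : Matrix c a α) (f : α → β) :
    (fromRows X Y).map f = fromRows (X.map f) (Y.map f) := by
  ext (i | i) j <;> rfl

lemma reindex_blocks {α n₁ p : Type*} [Zero α]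
    {m : Type*} (e : m ≃ (n₁ ⊕ p))
    (A X Y Z : Matrix n₁ n₁ α) :
    (fromBlocks A ((fromCols X 0).submatrix id e) ((fromRows Y 0).submatrix e id)
        ((fromBlocks Z 0 0 0).submatrix e e)).submatrix
      (((Equiv.refl n₁).sumCongr e).trans (Equiv.sumAssoc n₁ n₁ p).symm).symm
      (((Equiv.refl n₁).sumCongr e).trans (Equiv.sumAssoc n₁ n₁ p).symm).symm
      = fromBlocks (fromBlocks A X Y Z) 0 0 0 := by
  ext p q
  rcases p with (i | i) | i <;> rcases q with (j | j) | j <;>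
    simp [Equiv.sumCongr_apply, Equiv.sumAssoc, fromBlocks, fromCols, fromRows] <;> rfl

end Reind

end SOxAux

open SOxAux in
theorem stmt2 {nx nc nu ny : ℕ} (hnc : nx ≤ nc)
    (A : Matrix (Fin nx) (Fin nx) ℝ) (B : Matrix (Fin nx) (Fin nu) ℝ)
    (C : Matrix (Fin ny) (Fin nx) ℝ)
    (hstab : ∃ K : Matrix (Fin nu) (Fin nx) ℝ,
      ∀ zev ∈ spectrum ℂ ((A + B * K).map (Complex.ofReal : ℝ → ℂ)), ‖zev‖ < 1)
    (hdet : ∃ L : Matrix (Fin nx) (Fin ny) ℝ,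
      ∀ zev ∈ spectrum ℂ ((A - L * C).map (Complex.ofReal : ℝ → ℂ)), ‖zev‖ < 1) :
    ∃ (Ac : Matrix (Fin nc) (Fin nc) ℝ) (Bc : Matrix (Fin nc) (Fin ny) ℝ)
      (Cc : Matrix (Fin nu) (Fin nc) ℝ) (Dc : Matrix (Fin nu) (Fin ny) ℝ)
      (P : Matrix (Fin nx ⊕ Fin nc) (Fin nx ⊕ Fin nc) ℝ) (μstar ϵstar : ℝ),
      P.IsSymm ∧ μstar ∈ Set.Ico (-1 : ℝ) 0 ∧ 0 < ϵstar ∧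
      (P - ϵstar • 1).PosDef ∧
      ((1 + μstar) • P -
        (Fcl A B C Ac Bc Cc Dc)ᵀ * P * Fcl A B C Ac Bc Cc Dc).PosSemidef := by
  obtain ⟨K, hK⟩ := hstab
  obtain ⟨L, hL⟩ := hdet
  have hm : nx + (nc - nx) = nc := by omega
  set p := nc - nx with hp
  let e : Fin nc ≃ (Fin nx ⊕ Fin p) := (finCongr hm.symm).trans finSumFinEquiv.symm
  set Ac := ((fromBlocks (A + B*K - L*C) 0 0 0 :
      Matrix (Fin nx ⊕ Fin p) (Fin nx ⊕ Fin p) ℝ)).submatrix e e with hAc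
  set Bc := ((fromRows L 0 : Matrix (Fin nx ⊕ Fin p) (Fin ny) ℝ)).submatrix e id with hBc
  set Cc := ((fromCols K 0 : Matrix (Fin nu) (Fin nx ⊕ Fin p) ℝ)).submatrix id e with hCc
  have hmapadd : ∀ (M N : Matrix (Fin nx) (Fin nx) ℝ),
      (M + N).map (Complex.ofReal : ℝ → ℂ) = M.map Complex.ofReal + N.map Complex.ofReal := by
    intro M N; ext i j; simp
  have hmapsub : ∀ (M N : Matrix (Fin nx) (Fin nx) ℝ),
      (M - N).map (Complex.ofReal : ℝ → ℂ) = M.map Complex.ofReal - N.map Complex.ofReal := by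
    intro M N; ext i j; simp
  have hspec : ∀ z ∈ spectrum ℂ ((Fcl A B C Ac Bc Cc 0).map (Complex.ofReal : ℝ → ℂ)),
      ‖z‖ < 1 := by
    have hBCc : B * Cc = ((B*K).fromCols 0).submatrix id ⇑e := by
      rw [hCc]
      have h2 : B * (fromCols K 0).submatrix id ⇑e
          = (B * fromCols K 0).submatrix id ⇑e := rfl
      rw [h2, Matrix.mul_fromCols, Matrix.mul_zero]
    have hBcC : Bc * C = ((L*C).fromRows 0).submatrix ⇑e id := by
      rw [hBc]
      have h2 : (fromRows L 0).submatrix ⇑e id * C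
          = (fromRows L 0 * C).submatrix ⇑e id := rfl
      rw [h2, Matrix.fromRows_mul, Matrix.zero_mul]
    have h1 : Fcl A B C Ac Bc Cc 0 =
        fromBlocks A ((fromCols (B*K) 0).submatrix id e)
          ((fromRows (L*C) 0).submatrix e id) Ac := by
      rw [Fcl, hBCc, hBcC, Matrix.mul_zero, Matrix.zero_mul, add_zero]
    have hF2 : (Fcl A B C Ac Bc Cc 0).map (Complex.ofReal : ℝ → ℂ) =
        fromBlocks (A.map Complex.ofReal)
          ((fromCols ((B*K).map Complex.ofReal) 0).submatrix id e)
          ((fromRows ((L*C).map Complex.ofReal) 0).submatrix e id)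
          ((fromBlocks ((A + B*K - L*C).map Complex.ofReal) 0 0 0).submatrix e e) := by
      rw [h1, hAc, Matrix.fromBlocks_map, ← Matrix.submatrix_map, ← Matrix.submatrix_map,
        ← Matrix.submatrix_map, fromColumns_map', fromRows_map', Matrix.fromBlocks_map]
      simp
    intro z hz
    by_contra hge
    push_neg at hge
    have hz0 : z ≠ 0 := by
      intro h; rw [h] at hge; norm_num at hge
    rw [hF2] at hz
    set Φ := (((Equiv.refl (Fin nx)).sumCongr e).trans
      (Equiv.sumAssoc (Fin nx) (Fin nx) (Fin p)).symm) with hΦ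
    set W : Matrix ((Fin nx ⊕ Fin nx)) ((Fin nx ⊕ Fin nx)) ℂ :=
      fromBlocks (A.map Complex.ofReal) ((B*K).map Complex.ofReal)
        ((L*C).map Complex.ofReal) ((A + B*K - L*C).map Complex.ofReal) with hW
    have hWblk : (Matrix.reindexAlgEquiv ℂ ℂ Φ)
        (fromBlocks (A.map Complex.ofReal)
          ((fromCols ((B*K).map Complex.ofReal) 0).submatrix id e)
          ((fromRows ((L*C).map Complex.ofReal) 0).submatrix e id)
          ((fromBlocks ((A + B*K - L*C).map Complex.ofReal) 0 0 0).submatrix e e))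
        = fromBlocks W 0 0 0 := by
      rw [Matrix.reindexAlgEquiv_apply, Matrix.reindex_apply, hΦ, hW]
      exact reindex_blocks e _ _ _ _
    have hzW : z ∈ spectrum ℂ W := by
      apply spec_corner hz0 (p := Fin p)
      rw [← hWblk, AlgEquiv.spectrum_eq]
      exact hz
    set u : (Matrix (Fin nx ⊕ Fin nx) (Fin nx ⊕ Fin nx) ℂ)ˣ :=
      ⟨fromBlocks 1 0 (-1) 1, fromBlocks 1 0 1 1,
        by simp [Matrix.fromBlocks_multiply, ← Matrix.fromBlocks_one],
        by simp [Matrix.fromBlocks_multiply, ← Matrix.fromBlocks_one]⟩ with hu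
    have hconj : (u : Matrix (Fin nx ⊕ Fin nx) (Fin nx ⊕ Fin nx) ℂ) * W *
        ((u⁻¹ : (Matrix (Fin nx ⊕ Fin nx) (Fin nx ⊕ Fin nx) ℂ)ˣ) :
          Matrix (Fin nx ⊕ Fin nx) (Fin nx ⊕ Fin nx) ℂ) =
        fromBlocks ((A + B*K).map Complex.ofReal) ((B*K).map Complex.ofReal)
          0 ((A - L*C).map Complex.ofReal) := by
      show fromBlocks 1 0 (-1) 1 * W * fromBlocks 1 0 1 1 = _
      rw [hW, Matrix.fromBlocks_multiply, Matrix.fromBlocks_multiply]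
      rw [hmapadd, hmapsub, hmapsub, hmapadd]
      rw [Matrix.fromBlocks_inj]
      refine ⟨?_, ?_, ?_, ?_⟩ <;> · simp
                                    try abel
    have hzt : z ∈ spectrum ℂ
        (fromBlocks ((A + B*K).map Complex.ofReal) ((B*K).map Complex.ofReal)
          0 ((A - L*C).map Complex.ofReal)) := by
      rw [← hconj, spectrum.units_conjugate]
      exact hzW
    rcases spec_triangular hzt with h | h
    · exact absurd (hK z h) (not_lt.mpr hge)
    · exact absurd (hL z h) (not_lt.mpr hge)
  obtain ⟨P, μ, ε, h1, h2, h3, h4, h5⟩ := lyap (Fcl A B C Ac Bc Cc 0) hspec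
  exact ⟨Ac, Bc, Cc, 0, P, μ, ε, h1, h2, h3, h4, h5⟩
end

section
/- Suppose P(ν) = [[Y, I],[I, X]] is positive definite. If L̃(ν) = [[δ·P(ν), R(ν)ᵀ],[R(ν), 2·I − X]] is positive semidefinite, then S(ν) = [[δ·P(ν), F̃(ν)ᵀ],[F̃(ν), P(ν)]] is positive semidefinite. -/
open Matrix

/-- P(ν) = [[Y, I],[I, X]]. -/
def Pnu {n : ℕ} (X Y : Matrix (Fin n) (Fin n) ℝ) :
    Matrix (Fin n ⊕ Fin n) (Fin n ⊕ Fin n) ℝ :=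
  Matrix.fromBlocks Y 1 1 X

/-- R(ν) = [A·Y + B·K₃, A + B·K₄·C]. -/
def Rnu {n nu ny : ℕ} (A : Matrix (Fin n) (Fin n) ℝ) (B : Matrix (Fin n) (Fin nu) ℝ)
    (C : Matrix (Fin ny) (Fin n) ℝ) (X Y : Matrix (Fin n) (Fin n) ℝ)
    (K3 : Matrix (Fin nu) (Fin n) ℝ) (K4 : Matrix (Fin nu) (Fin ny) ℝ) :
    Matrix (Fin n) (Fin n ⊕ Fin n) ℝ :=
  Matrix.fromCols (A * Y + B * K3) (A + B * K4 * C)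

/-- F̃(ν) = [[A·Y + B·K₃, A + B·K₄·C],[X·(A·Y + B·K₃), X·(A + B·K₄·C)]]. -/
def Ftil {n nu ny : ℕ} (A : Matrix (Fin n) (Fin n) ℝ) (B : Matrix (Fin n) (Fin nu) ℝ)
    (C : Matrix (Fin ny) (Fin n) ℝ) (X Y : Matrix (Fin n) (Fin n) ℝ)
    (K3 : Matrix (Fin nu) (Fin n) ℝ) (K4 : Matrix (Fin nu) (Fin ny) ℝ) :
    Matrix (Fin n ⊕ Fin n) (Fin n ⊕ Fin n) ℝ :=
  Matrix.fromBlocks (A * Y + B * K3) (A + B * K4 * C)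
    (X * (A * Y + B * K3)) (X * (A + B * K4 * C))

private lemma fromColumns_zero_fromRows {R : Type*} [Zero R] {m₁ m₂ n₁ n₂ : Type*}
    (B₁ : Matrix m₁ n₂ R) (B₂ : Matrix m₂ n₂ R) :
    Matrix.fromCols (0 : Matrix (m₁ ⊕ m₂) n₁ R) (Matrix.fromRows B₁ B₂) =
      Matrix.fromBlocks 0 B₁ 0 B₂ := by
  ext (_ | _) (_ | _) <;> simp [Matrix.fromCols, Matrix.fromRows] <;> rfl

theorem stmt3 {n nu ny : ℕ}
    (A : Matrix (Fin n) (Fin n) ℝ) (B : Matrix (Fin n) (Fin nu) ℝ)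
    (C : Matrix (Fin ny) (Fin n) ℝ)
    (X Y : Matrix (Fin n) (Fin n) ℝ) (hX : X.IsSymm) (hY : Y.IsSymm)
    (K1 : Matrix (Fin n) (Fin n) ℝ) (K2 : Matrix (Fin n) (Fin ny) ℝ)
    (K3 : Matrix (Fin nu) (Fin n) ℝ) (K4 : Matrix (Fin nu) (Fin ny) ℝ)
    (δ : ℝ) (hδ : δ ∈ Set.Ici (1 : ℝ))
    (hP : (Pnu X Y).PosDef)
    (hLtil : (Matrix.fromBlocks (δ • Pnu X Y) (Rnu A B C X Y K3 K4)ᵀ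
      (Rnu A B C X Y K3 K4) ((2 : ℝ) • 1 - X)).PosSemidef) :
    (Matrix.fromBlocks (δ • Pnu X Y) (Ftil A B C X Y K3 K4)ᵀ
      (Ftil A B C X Y K3 K4) (Pnu X Y)).PosSemidef := by
  set P := Pnu X Y with hPdef
  set R := Rnu A B C X Y K3 K4 with hRdef
  set L := Matrix.fromBlocks (δ • P) Rᵀ R ((2 : ℝ) • 1 - X) with hLdef
  -- auxiliary matrices
  set U : Matrix (Fin n) (Fin n ⊕ Fin n) ℝ := Matrix.fromCols 1 X with hU
  set W : Matrix (Fin n ⊕ Fin n) (Fin n ⊕ Fin n) ℝ :=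
    Matrix.fromBlocks 1 0 (-1) (1 - X) with hW
  set G : Matrix ((Fin n ⊕ Fin n) ⊕ Fin n) ((Fin n ⊕ Fin n) ⊕ (Fin n ⊕ Fin n)) ℝ :=
    Matrix.fromBlocks 1 0 0 U with hG
  set G₂ : Matrix (Fin n ⊕ Fin n) ((Fin n ⊕ Fin n) ⊕ (Fin n ⊕ Fin n)) ℝ :=
    Matrix.fromCols 0 W with hG2
  have hXt : Xᵀ = X := hX
  have key : Matrix.fromBlocks (δ • P) (Ftil A B C X Y K3 K4)ᵀ
      (Ftil A B C X Y K3 K4) P = Gᵀ * L * G + G₂ᵀ * P * G₂ := by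
    rw [hG, hG2, hLdef, hU, hW, hPdef, hRdef, Pnu, Rnu, Ftil]
    simp only [fromBlocks_transpose, transpose_fromCols, transpose_one, transpose_zero,
      transpose_neg, transpose_sub, transpose_add, transpose_mul, hXt, hY.eq,
      fromBlocks_multiply, fromRows_mul, mul_fromCols, fromRows_mul_fromCols,
      fromCols_mul_fromRows, Matrix.one_mul, Matrix.mul_one, Matrix.zero_mul,
      Matrix.mul_zero, one_mul, mul_one, zero_mul, mul_zero, add_zero, zero_add,
      neg_zero, fromBlocks_add, fromBlocks_smul, smul_zero, fromRows_zero, fromCols_zero,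
      fromCols_fromRows_eq_fromBlocks, fromRows_fromCols_eq_fromBlocks,
      fromColumns_zero_fromRows, two_smul, fromBlocks_add]
    rw [fromBlocks_inj]
    refine ⟨?_, ?_, ?_, ?_⟩ <;>
      first
        | rfl
        | (rw [fromCols_inj.eq_iff]; constructor <;> noncomm_ring)
        | (rw [fromBlocks_inj]; refine ⟨?_, ?_, ?_, ?_⟩ <;> noncomm_ring)
        | noncomm_ring
  rw [key]
  have h1 : (Gᵀ * L * G).PosSemidef := by
    have := hLtil.conjTranspose_mul_mul_same G
    rwa [conjTranspose_eq_transpose_of_trivial] at this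
  have h2 : (G₂ᵀ * P * G₂).PosSemidef := by
    have := hP.posSemidef.conjTranspose_mul_mul_same G₂
    rwa [conjTranspose_eq_transpose_of_trivial] at this
  exact h1.add h2
end

section
/- Let A ∈ ℝ^{n×n}, B ∈ ℝ^{n×n_u}, C ∈ ℝ^{n_y×n}, let X, Y, U, V ∈ ℝ^{n×n} with U and V invertible, and let controller matrices A_c ∈ ℝ^{n×n}, B_c ∈ ℝ^{n×n_y}, C_c ∈ ℝ^{n_u×n}, D_c ∈ ℝ^{n_u×n_y} and matrices K_1 ∈ ℝ^{n×n}, K_2 ∈ ℝ^{n×n_y}, K_3 ∈ ℝ^{n_u×n}, K_4 ∈ ℝ^{n_u×n_y} satisfy the change-of-variables relation [[K_1 − X·A·Y, K_2],[K_3, K_4]] = [[U, X·B],[0, I]] · [[A_c, B_c],[C_c, D_c]] · [[Vᵀ, 0],[C·Y, I]]. Define F = [[A + B·D_c·C, B·C_c],[B_c·C, A_c]], H = [[I, 0],[0, 0]], 𝒴 = [[Y, I],[Vᵀ, 0]], 𝒵 = [[I, 0],[X, U]]. Then 𝒵·F·𝒴 = [[A·Y + B·K_3, A + B·K_4·C],[K_1,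 X·A + K_2·C]] and 𝒵·(H·F)·𝒴 = [[A·Y + B·K_3, A + B·K_4·C],[X·(A·Y + B·K_3), X·(A + B·K_4·C)]]. -/
open Matrix

theorem stmt8 {n nu ny : ℕ}
    (A : Matrix (Fin n) (Fin n) ℝ) (B : Matrix (Fin n) (Fin nu) ℝ)
    (C : Matrix (Fin ny) (Fin n) ℝ)
    (X Y U V : Matrix (Fin n) (Fin n) ℝ) (hU : IsUnit U) (hV : IsUnit V)
    (Ac : Matrix (Fin n) (Fin n) ℝ) (Bc : Matrix (Fin n) (Fin ny) ℝ)
    (Cc : Matrix (Fin nu) (Fin n) ℝ) (Dc : Matrix (Fin nu) (Fin ny) ℝ)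
    (K1 : Matrix (Fin n) (Fin n) ℝ) (K2 : Matrix (Fin n) (Fin ny) ℝ)
    (K3 : Matrix (Fin nu) (Fin n) ℝ) (K4 : Matrix (Fin nu) (Fin ny) ℝ)
    (hcov : Matrix.fromBlocks (K1 - X * A * Y) K2 K3 K4 =
      Matrix.fromBlocks U (X * B) (0 : Matrix (Fin nu) (Fin n) ℝ)
          (1 : Matrix (Fin nu) (Fin nu) ℝ) *
        Matrix.fromBlocks Ac Bc Cc Dc *
        Matrix.fromBlocks Vᵀ (0 : Matrix (Fin n) (Fin ny) ℝ) (C * Y)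
          (1 : Matrix (Fin ny) (Fin ny) ℝ)) :
    Matrix.fromBlocks (1 : Matrix (Fin n) (Fin n) ℝ)
        (0 : Matrix (Fin n) (Fin n) ℝ) X U *
      Matrix.fromBlocks (A + B * Dc * C) (B * Cc) (Bc * C) Ac *
      Matrix.fromBlocks Y (1 : Matrix (Fin n) (Fin n) ℝ) Vᵀ
        (0 : Matrix (Fin n) (Fin n) ℝ) =
      Matrix.fromBlocks (A * Y + B * K3) (A + B * K4 * C) K1 (X * A + K2 * C) ∧
    Matrix.fromBlocks (1 : Matrix (Fin n) (Fin n) ℝ)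
        (0 : Matrix (Fin n) (Fin n) ℝ) X U *
      (Matrix.fromBlocks (1 : Matrix (Fin n) (Fin n) ℝ) 0 0
          (0 : Matrix (Fin n) (Fin n) ℝ) *
        Matrix.fromBlocks (A + B * Dc * C) (B * Cc) (Bc * C) Ac) *
      Matrix.fromBlocks Y (1 : Matrix (Fin n) (Fin n) ℝ) Vᵀ
        (0 : Matrix (Fin n) (Fin n) ℝ) =
      Matrix.fromBlocks (A * Y + B * K3) (A + B * K4 * C)
        (X * (A * Y + B * K3)) (X * (A + B * K4 * C)) := by
  simp only [Matrix.fromBlocks_multiply, Matrix.one_mul, Matrix.mul_one,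
    Matrix.zero_mul, Matrix.mul_zero, add_zero, zero_add] at hcov ⊢
  rw [Matrix.fromBlocks_inj] at hcov
  obtain ⟨h1, h2, h3, h4⟩ := hcov
  have h1' := eq_add_of_sub_eq h1
  constructor <;> rw [Matrix.fromBlocks_inj] <;>
    refine ⟨?_, ?_, ?_, ?_⟩ <;>
    simp only [h1', h2, h3, h4, Matrix.mul_add, Matrix.add_mul, Matrix.mul_assoc] <;>
    abel
end

section
/- Let n > m > 0 and T ≥ 1 be integers with n_y ≤ n_c, and suppose all entries of Ā_c ∈ ℝ^{n_c×n_c}, B̄_c ∈ ℝ^{n_c×n_y}, C̄_c ∈ ℝ^{n_u×n_c}, D̄_c ∈ ℝ^{n_u×n_y} and of ȳ[k] ∈ ℝ^{n_y} for every k lie in Q(n,m). Let x_c : ℕ → ℝ^{n_c} and u : ℕ → ℝ^{n_u} satisfy x_c[0] = 0, x_c[k+1] = Ā_c·x_c[k] + B̄_c·ȳ[k] if (k+1) mod T ≠ 0, x_c[k+1] = 0 if (k+1) mod T = 0, and u[k] = C̄_c·x_c[k] + D̄_c·ȳ[k]. Then for every k with k mod T ≥ 1, every entry of x_c[k] lies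 in Q((n_c+1)·(k mod T − 1) + n_y + n·(k mod T + 1), m·(k mod T + 1)), and for every k, every entry of u[k] lies in Q((n_c+1)·(k mod T) + n_y + n·(k mod T + 2), m·(k mod T + 2)). -/
open Matrix

section QsetLemmas

lemma mod_succ_back (j T s : ℕ) (h : (j+1) % T = s+1) : j % T = s := by
  rcases Nat.eq_zero_or_pos T with h0 | h0
  · simp [h0] at h ⊢; omega
  · have h1 : j % T < T := Nat.mod_lt _ h0
    have h2 : s + 1 < T := h ▸ Nat.mod_lt _ h0
    have h3 : (j + 1) % T = (j % T + 1) % T := by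
      conv_lhs => rw [Nat.add_mod, Nat.mod_eq_of_lt (show 1 < T by omega)]
    rw [h3] at h
    rcases Nat.lt_or_ge (j % T + 1) T with h4 | h4
    · rwa [Nat.mod_eq_of_lt h4, Nat.add_right_cancel_iff] at h
    · have h5 : j % T + 1 = T := by omega
      rw [h5, Nat.mod_self] at h; omega

lemma bits_exist : ∀ (p w : ℕ), w < 2^p →
    ∃ c : ℕ → Bool, w = ∑ j ∈ Finset.range p, (if c j then 2^j else 0) := by
  intro p
  induction p with
  | zero => intro w hw; exact ⟨fun _ => false, by simpa using by omega⟩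
  | succ p ih =>
    intro w hw
    by_cases h : 2^p ≤ w
    · obtain ⟨c, hc⟩ := ih (w - 2^p) (by rw [pow_succ] at hw; omega)
      refine ⟨fun j => if j = p then true else c j, ?_⟩
      rw [Finset.sum_range_succ]
      have : ∑ j ∈ Finset.range p, (if (if j = p then true else c j) then 2^j else 0)
          = ∑ j ∈ Finset.range p, (if c j then 2^j else 0) := by
        refine Finset.sum_congr rfl fun j hj => ?_
        have : j ≠ p := Nat.ne_of_lt (Finset.mem_range.mp hj)
        simp [this]
      rw [this]; simp; omega
    · obtain ⟨c, hc⟩ := ih w (by omega)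
      refine ⟨fun j => if j = p then false else c j, ?_⟩
      rw [Finset.sum_range_succ]
      have : ∑ j ∈ Finset.range p, (if (if j = p then false else c j) then 2^j else 0)
          = ∑ j ∈ Finset.range p, (if c j then 2^j else 0) := by
        refine Finset.sum_congr rfl fun j hj => ?_
        have : j ≠ p := Nat.ne_of_lt (Finset.mem_range.mp hj)
        simp [this]
      rw [this]; simp [hc]

lemma bits_lt (c : ℕ → Bool) : ∀ p : ℕ,
    (∑ j ∈ Finset.range p, (if c j then 2^j else 0)) < 2^p := by
  intro p
  induction p with
  | zero => simp
  | succ p ih =>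
    rw [Finset.sum_range_succ, pow_succ]
    have : (if c p then 2^p else 0) ≤ 2^p := by split <;> omega
    omega

lemma sum_conv (b : ℕ → Bool) (n m : ℕ) :
    ∑ i ∈ Finset.Ico 1 n, (if b i then (1:ℝ) else 0) * (2 : ℝ) ^ ((i : ℤ) - (m : ℤ) - 1)
      = ((∑ j ∈ Finset.range (n-1), (if b (1+j) then 2^j else 0) : ℕ) : ℝ)
          * (2 : ℝ) ^ (-(m : ℤ)) := by
  rw [Finset.sum_Ico_eq_sum_range, Nat.cast_sum, Finset.sum_mul]
  refine Finset.sum_congr rfl fun j hj => ?_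
  by_cases hb : b (1+j)
  · simp only [hb, if_true, one_mul, Nat.cast_pow, Nat.cast_ofNat]
    rw [← zpow_natCast (2:ℝ) j, ← zpow_add₀ (two_ne_zero)]
    congr 1
    push_cast
    ring
  · simp [hb]

lemma lead_conv (n m : ℕ) (hn : 1 ≤ n) :
    (2 : ℝ) ^ ((n : ℤ) - (m : ℤ) - 1) = ((2^(n-1) : ℕ) : ℝ) * (2:ℝ) ^ (-(m:ℤ)) := by
  push_cast
  rw [← zpow_natCast (2:ℝ) (n-1), ← zpow_add₀ (two_ne_zero)]
  congr 1
  have : ((n - 1 : ℕ) : ℤ) = (n : ℤ) - 1 := by omega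
  rw [this]; ring

end QsetLemmas

/-- The fixed-point set Q(n,m) of numbers representable with n bits of which m
fractional: Q(n,m) = {−b_n·2^{n−m−1} + Σ_{i=1}^{n−1} 2^{i−m−1}·b_i : b_i ∈ {0,1}}. -/
def Qset (n m : ℕ) : Set ℝ :=
  {x | ∃ b : ℕ → Bool,
    x = -((if b n then (1 : ℝ) else 0) * (2 : ℝ) ^ ((n : ℤ) - (m : ℤ) - 1)) +
        ∑ i ∈ Finset.Ico 1 n, (if b i then (1 : ℝ) else 0) * (2 : ℝ) ^ ((i : ℤ) - (m : ℤ) - 1)}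

lemma mem_Qset_iff {x : ℝ} {n m : ℕ} (hn : 1 ≤ n) :
    x ∈ Qset n m ↔ ∃ z : ℤ, -(2^(n-1)) ≤ z ∧ z < 2^(n-1) ∧ x = (z : ℝ) * (2:ℝ) ^ (-(m:ℤ)) := by
  constructor
  · rintro ⟨b, rfl⟩
    have hS : (∑ j ∈ Finset.range (n-1), (if b (1+j) then 2^j else 0)) < 2^(n-1) := bits_lt _ _
    refine ⟨(if b n then -((2:ℤ)^(n-1)) else 0)
        + ((∑ j ∈ Finset.range (n-1), (if b (1+j) then 2^j else 0) : ℕ) : ℤ), ?_, ?_, ?_⟩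
    · have hP : (0:ℤ) < 2^(n-1) := by positivity
      have h0 : (0:ℤ) ≤ ((∑ j ∈ Finset.range (n-1), (if b (1+j) then 2^j else 0) : ℕ):ℤ) :=
        Int.natCast_nonneg _
      split <;> omega
    · have hP : (0:ℤ) < 2^(n-1) := by positivity
      have : ((∑ j ∈ Finset.range (n-1), (if b (1+j) then 2^j else 0) : ℕ):ℤ) < 2^(n-1) := by
        exact_mod_cast hS
      split <;> omega
    · rw [sum_conv, lead_conv n m hn]
      split <;> push_cast <;> ring
  · rintro ⟨z, hz1, hz2, rfl⟩
    by_cases hz : 0 ≤ z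
    · have hw : z.toNat < 2^(n-1) := by
        have : ((2:ℤ)^(n-1)) = ((2^(n-1) : ℕ) : ℤ) := by push_cast; ring
        omega
      obtain ⟨c, hc⟩ := bits_exist (n-1) z.toNat hw
      refine ⟨fun i => if i = n then false else if 1 ≤ i then c (i-1) else false, ?_⟩
      rw [sum_conv]
      have he : ∑ j ∈ Finset.range (n-1),
          (if (if 1+j = n then false else if 1 ≤ 1+j then c (1+j-1) else false)
            then 2^j else 0) = z.toNat := by
        rw [hc]
        refine Finset.sum_congr rfl fun j hj => ?_
        have h1 : 1 + j ≠ n := by have := Finset.mem_range.mp hj; omega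
        simp [h1]
      rw [he]
      have : ((z.toNat : ℕ) : ℝ) = (z : ℝ) := by
        exact_mod_cast congrArg (Int.cast : ℤ → ℝ) (Int.toNat_of_nonneg hz)
      simp [this]
    · push_neg at hz
      have hw' : (0:ℤ) ≤ z + 2^(n-1) := by omega
      have hw : (z + 2^(n-1)).toNat < 2^(n-1) := by
        have : ((2:ℤ)^(n-1)) = ((2^(n-1) : ℕ) : ℤ) := by push_cast; ring
        omega
      obtain ⟨c, hc⟩ := bits_exist (n-1) _ hw
      refine ⟨fun i => if i = n then true else if 1 ≤ i then c (i-1) else false, ?_⟩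
      rw [sum_conv]
      have he : ∑ j ∈ Finset.range (n-1),
          (if (if 1+j = n then true else if 1 ≤ 1+j then c (1+j-1) else false)
            then 2^j else 0) = (z + 2^(n-1)).toNat := by
        rw [hc]
        refine Finset.sum_congr rfl fun j hj => ?_
        have h1 : 1 + j ≠ n := by have := Finset.mem_range.mp hj; omega
        simp [h1]
      rw [he]
      have hcast : (((z + 2^(n-1)).toNat : ℕ) : ℝ) = (z : ℝ) + ((2^(n-1):ℕ):ℝ) := by
        have := Int.toNat_of_nonneg hw'
        have h2 := congrArg (Int.cast : ℤ → ℝ) this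
        push_cast at h2 ⊢
        linarith
      rw [hcast, lead_conv n m hn]
      have hbn : (if (if n = n then true else if 1 ≤ n then c (n-1) else false) = true
          then (1:ℝ) else 0) = 1 := by simp
      rw [hbn]
      ring

lemma Qset_zero {n m : ℕ} (hn : 1 ≤ n) : (0:ℝ) ∈ Qset n m := by
  rw [mem_Qset_iff hn]
  have : (0:ℤ) < 2^(n-1) := by positivity
  exact ⟨0, by omega, by omega, by simp⟩

lemma Qset_mono {n m n' m' : ℕ} (hn : 1 ≤ n) (hm : m ≤ m') (h : n + (m' - m) ≤ n') :
    Qset n m ⊆ Qset n' m' := by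
  intro x hx
  have hn' : 1 ≤ n' := by omega
  rw [mem_Qset_iff hn] at hx
  rw [mem_Qset_iff hn']
  obtain ⟨z, h1, h2, rfl⟩ := hx
  refine ⟨z * 2^(m'-m), ?_, ?_, ?_⟩
  · have hp : (2:ℤ)^(n-1) * 2^(m'-m) = 2^(n-1+(m'-m)) := (pow_add 2 _ _).symm
    have hle : (2:ℤ)^(n-1+(m'-m)) ≤ 2^(n'-1) := pow_le_pow_right₀ (by norm_num) (by omega)
    have hq : (0:ℤ) < 2^(m'-m) := by positivity
    nlinarith
  · have hp : (2:ℤ)^(n-1) * 2^(m'-m) = 2^(n-1+(m'-m)) := (pow_add 2 _ _).symm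
    have hle : (2:ℤ)^(n-1+(m'-m)) ≤ 2^(n'-1) := pow_le_pow_right₀ (by norm_num) (by omega)
    have hq : (0:ℤ) < 2^(m'-m) := by positivity
    nlinarith
  · push_cast
    rw [mul_assoc, ← zpow_natCast (2:ℝ) (m'-m), ← zpow_add₀ (two_ne_zero)]
    congr 2
    omega

lemma Qset_mul {x y : ℝ} {n1 m1 n2 m2 : ℕ} (h1 : 1 ≤ n1) (h2 : 1 ≤ n2)
    (hx : x ∈ Qset n1 m1) (hy : y ∈ Qset n2 m2) : x * y ∈ Qset (n1+n2) (m1+m2) := by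
  rw [mem_Qset_iff h1] at hx
  rw [mem_Qset_iff h2] at hy
  rw [mem_Qset_iff (by omega : 1 ≤ n1+n2)]
  obtain ⟨z1, ha1, hb1, rfl⟩ := hx
  obtain ⟨z2, ha2, hb2, rfl⟩ := hy
  refine ⟨z1 * z2, ?_, ?_, ?_⟩
  · have hp : (2:ℤ)^(n1-1) * 2^(n2-1) * 2 = 2^(n1+n2-1) := by
      rw [← pow_add, ← pow_succ]; congr 1; omega
    nlinarith
  · have hp : (2:ℤ)^(n1-1) * 2^(n2-1) * 2 = 2^(n1+n2-1) := by
      rw [← pow_add, ← pow_succ]; congr 1; omega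
    nlinarith
  · push_cast
    rw [show (-((m1:ℤ)+(m2:ℤ))) = (-(m1:ℤ)) + (-(m2:ℤ)) by ring,
      zpow_add₀ (two_ne_zero : (2:ℝ) ≠ 0)]
    ring

lemma Qset_sum {ι : Type*} (s : Finset ι) (f : ι → ℝ) {p q : ℕ} (hp : 1 ≤ p)
    (h : ∀ i ∈ s, f i ∈ Qset p q) : (∑ i ∈ s, f i) ∈ Qset (p + s.card) q := by
  simp only [mem_Qset_iff hp] at h
  choose z hz1 hz2 hz3 using h
  rw [mem_Qset_iff (by omega : 1 ≤ p + s.card)]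
  refine ⟨∑ i ∈ s.attach, z i i.2, ?_, ?_, ?_⟩
  · have hlow : -(s.card * (2:ℤ)^(p-1)) ≤ ∑ i ∈ s.attach, z i i.2 := by
      calc -(s.card * (2:ℤ)^(p-1)) = ∑ _i ∈ s.attach, -((2:ℤ)^(p-1)) := by
            simp [Finset.sum_const, Finset.card_attach]
        _ ≤ _ := Finset.sum_le_sum fun i _ => hz1 i i.2
    have hc : (s.card : ℤ) ≤ 2^(s.card) := by exact_mod_cast (Nat.lt_two_pow_self (n := s.card)).le
    have hp2 : (2:ℤ)^(p-1) * 2^(s.card) = 2^(p + s.card - 1) := by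
      rw [← pow_add]; congr 1; omega
    have hq : (0:ℤ) < 2^(p-1) := by positivity
    nlinarith
  · have hhigh : ∑ i ∈ s.attach, z i i.2 ≤ s.card * ((2:ℤ)^(p-1) - 1) := by
      calc ∑ i ∈ s.attach, z i i.2 ≤ ∑ _i ∈ s.attach, ((2:ℤ)^(p-1) - 1) :=
            Finset.sum_le_sum fun i _ => by have := hz2 i i.2; omega
        _ = s.card * ((2:ℤ)^(p-1) - 1) := by
            simp [Finset.sum_const, Finset.card_attach]; ring
    have hc : (s.card : ℤ) < 2^(s.card) := by exact_mod_cast Nat.lt_two_pow_self (n := s.card)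
    have hp2 : (2:ℤ)^(p-1) * 2^(s.card) = 2^(p + s.card - 1) := by
      rw [← pow_add]; congr 1; omega
    have hq : (0:ℤ) < 2^(p-1) := by positivity
    have hc0 : (0:ℤ) ≤ (s.card : ℤ) := Int.natCast_nonneg _
    nlinarith
  · rw [← Finset.sum_attach s f]
    push_cast
    rw [Finset.sum_mul]
    exact Finset.sum_congr rfl fun i _ => hz3 i i.2

lemma Qset_add {x y : ℝ} {p q : ℕ} (hp : 1 ≤ p)
    (hx : x ∈ Qset p q) (hy : y ∈ Qset p q) : x + y ∈ Qset (p+1) q := by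
  rw [mem_Qset_iff hp] at hx hy
  rw [mem_Qset_iff (by omega : 1 ≤ p+1)]
  obtain ⟨z1, ha1, hb1, rfl⟩ := hx
  obtain ⟨z2, ha2, hb2, rfl⟩ := hy
  refine ⟨z1 + z2, ?_, ?_, by push_cast; ring⟩
  · have : (2:ℤ)^(p+1-1) = 2^(p-1) * 2 := by rw [← pow_succ]; congr 1; omega
    omega
  · have : (2:ℤ)^(p+1-1) = 2^(p-1) * 2 := by rw [← pow_succ]; congr 1; omega
    omega

theorem stmt16 {nc ny nu : ℕ} (n m T : ℕ) (hm : 0 < m) (hmn : m < n) (hT : 1 ≤ T)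
    (hny : ny ≤ nc)
    (Abar : Matrix (Fin nc) (Fin nc) ℝ) (Bbar : Matrix (Fin nc) (Fin ny) ℝ)
    (Cbar : Matrix (Fin nu) (Fin nc) ℝ) (Dbar : Matrix (Fin nu) (Fin ny) ℝ)
    (hA : ∀ i j, Abar i j ∈ Qset n m) (hB : ∀ i j, Bbar i j ∈ Qset n m)
    (hC : ∀ i j, Cbar i j ∈ Qset n m) (hD : ∀ i j, Dbar i j ∈ Qset n m)
    (ybar : ℕ → Fin ny → ℝ) (hy : ∀ k i, ybar k i ∈ Qset n m)
    (xc : ℕ → Fin nc → ℝ) (u : ℕ → Fin nu → ℝ)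
    (hxc0 : xc 0 = 0)
    (hxc : ∀ k : ℕ, xc (k + 1) =
      if (k + 1) % T ≠ 0 then Abar.mulVec (xc k) + Bbar.mulVec (ybar k) else 0)
    (hu : ∀ k : ℕ, u k = Cbar.mulVec (xc k) + Dbar.mulVec (ybar k)) :
    (∀ k : ℕ, 1 ≤ k % T → ∀ i,
      xc k i ∈ Qset ((nc + 1) * (k % T - 1) + ny + n * (k % T + 1)) (m * (k % T + 1))) ∧
    (∀ k : ℕ, ∀ i,
      u k i ∈ Qset ((nc + 1) * (k % T) + ny + n * (k % T + 2)) (m * (k % T + 2))) := by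
  have hn1 : 1 ≤ n := by omega
  have hzero : ∀ k, k % T = 0 → xc k = 0 := by
    intro k hk
    cases k with
    | zero => exact hxc0
    | succ j => rw [hxc j]; simp [hk]
  -- dot product with the ybar vector
  have hDdot : ∀ (p : ℕ) (F : Matrix (Fin p) (Fin ny) ℝ), (∀ i j, F i j ∈ Qset n m) →
      ∀ (y : Fin ny → ℝ), (∀ j, y j ∈ Qset n m) →
      ∀ i, F.mulVec y i ∈ Qset (ny + n * 2) (m * 2) := by
    intro p F hF y hyy i
    have hE : F.mulVec y i = ∑ j : Fin ny, F i j * y j := rfl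
    rw [hE]
    have hmem := Qset_sum Finset.univ (fun j => F i j * y j)
      (by omega : 1 ≤ n + n) (fun j _ => Qset_mul hn1 hn1 (hF i j) (hyy j))
    simp only [Finset.card_univ, Fintype.card_fin] at hmem
    rw [show ny + n*2 = n + n + ny by ring, show m*2 = m + m by ring]
    exact hmem
  -- main recursion step
  have hkey : ∀ (p : ℕ) (E : Matrix (Fin p) (Fin nc) ℝ) (F : Matrix (Fin p) (Fin ny) ℝ),
      (∀ i j, E i j ∈ Qset n m) → (∀ i j, F i j ∈ Qset n m) →
      ∀ (s : ℕ) (x : Fin nc → ℝ) (y : Fin ny → ℝ),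
      (∀ j, x j ∈ Qset ((nc+1)*s + ny + n*(s+2)) (m*(s+2))) →
      (∀ j, y j ∈ Qset n m) →
      ∀ i, (E.mulVec x + F.mulVec y) i ∈ Qset ((nc+1)*(s+1) + ny + n*(s+3)) (m*(s+3)) := by
    intro p E F hE hF s x y hx hyy i
    have hns : n ≤ n*(s+2) := Nat.le_mul_of_pos_right n (by omega)
    have hNx1 : 1 ≤ (nc+1)*s + ny + n*(s+2) := by omega
    have hEpart : (E.mulVec x) i
        ∈ Qset (n + ((nc+1)*s + ny + n*(s+2)) + nc) (m*(s+3)) := by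
      have hee : (E.mulVec x) i = ∑ j : Fin nc, E i j * x j := rfl
      rw [hee]
      have hmem := Qset_sum Finset.univ (fun j => E i j * x j)
        (by omega : 1 ≤ n + ((nc+1)*s + ny + n*(s+2)))
        (fun j _ => Qset_mul hn1 hNx1 (hE i j) (hx j))
      simp only [Finset.card_univ, Fintype.card_fin] at hmem
      rw [show m*(s+3) = m + m*(s+2) by ring]
      exact hmem
    have hFpart : (F.mulVec y) i
        ∈ Qset (n + ((nc+1)*s + ny + n*(s+2)) + nc) (m*(s+3)) := by
      have h1 : (F.mulVec y) i ∈ Qset (ny + n*2) (m*2) := hDdot p F hF y hyy i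
      have hm2 : m*2 ≤ m*(s+3) := Nat.mul_le_mul_left m (by omega)
      have e1 : m*(s+3) - m*2 = m*(s+1) := by
        have : m*(s+3) = m*(s+1) + m*2 := by ring
        omega
      refine Qset_mono (by omega) hm2 ?_ h1
      rw [e1]
      have h2 : m*(s+1) ≤ n*(s+1) := Nat.mul_le_mul_right (s+1) hmn.le
      have h3 : n*(s+2) = n*(s+1) + n := by ring
      omega
    have hadd := Qset_add (by omega : 1 ≤ n + ((nc+1)*s + ny + n*(s+2)) + nc) hEpart hFpart
    rw [show (nc+1)*(s+1) + ny + n*(s+3) = n + ((nc+1)*s + ny + n*(s+2)) + nc + 1 by ring]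
    exact hadd
  -- the x_c statement, by induction on k % T
  have hxcQ : ∀ s : ℕ, ∀ k, k % T = s + 1 → ∀ i,
      xc k i ∈ Qset ((nc+1)*s + ny + n*(s+2)) (m*(s+2)) := by
    intro s
    induction s with
    | zero =>
      intro k hk i
      obtain ⟨j, rfl⟩ : ∃ j, k = j + 1 := by
        cases k with
        | zero => rw [Nat.zero_mod] at hk; omega
        | succ j => exact ⟨j, rfl⟩
      have hj : j % T = 0 := mod_succ_back j T 0 hk
      rw [hxc j, if_pos (show (j+1) % T ≠ 0 by omega)]
      rw [hzero j hj]
      simpa [Matrix.mulVec_zero] using hDdot nc Bbar hB (ybar j) (hy j) i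
    | succ s ih =>
      intro k hk i
      obtain ⟨j, rfl⟩ : ∃ j, k = j + 1 := by
        cases k with
        | zero => rw [Nat.zero_mod] at hk; omega
        | succ j => exact ⟨j, rfl⟩
      have hj : j % T = s + 1 := mod_succ_back j T (s+1) hk
      rw [hxc j, if_pos (show (j+1) % T ≠ 0 by omega)]
      exact hkey nc Abar Bbar hA hB s (xc j) (ybar j) (ih j hj) (hy j) i
  refine ⟨?_, ?_⟩
  · intro k hk i
    obtain ⟨s, hs⟩ : ∃ s, k % T = s + 1 := ⟨k % T - 1, by omega⟩
    rw [hs]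
    simp only [Nat.add_sub_cancel]
    exact hxcQ s k hs i
  · intro k i
    rcases Nat.eq_zero_or_pos (k % T) with hr | hr
    · rw [hu k, hzero k hr, hr]
      simpa [Matrix.mulVec_zero] using hDdot nu Dbar hD (ybar k) (hy k) i
    · obtain ⟨s, hs⟩ : ∃ s, k % T = s + 1 := ⟨k % T - 1, by omega⟩
      rw [hu k, hs]
      exact hkey nu Cbar Dbar hC hD s (xc k) (ybar k) (hxcQ s k hs) (hy k) i
end
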